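/- Let E be a Banach lattice and let F : E →L E be a positive bounded linear operator. Then the following are equivalent: (i) the operator I − F is bijective and its inverse is a positive bounded linear operator on E; (ii) there exists n ≥ 1 such that ‖Fⁿ‖ < 1 (equivalently, the spectral radius r(F) = limₙ ‖Fⁿ‖^{1/n} is strictly less than 1). Moreover, in this case (I − F)⁻¹ = Σ_{k=0}^∞ Fᵏ, which is a positive operator. -/

import Mathlib

lemma aux_pow_pos {E : Type*} [NormedAddCommGroup E] [Lattice E] [HasSolidNorm E] [IsOrderedAddMonoid E] [NormedSpace ℝ E]
    (F : E →L[ℝ] E) (hF : ∀ x : E, 0 ≤ x → 0 ≤ F x) :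
    ∀ k : ℕ, ∀ x : E, 0 ≤ x → 0 ≤ (F ^ k) x := by
  intro k
  induction k with
  | zero => intro x hx; simpa using hx
  | succ k ih =>
    intro x hx
    rw [pow_succ, ContinuousLinearMap.mul_apply]
    exact ih _ (hF x hx)

lemma aux_mono {E : Type*} [NormedAddCommGroup E] [Lattice E] [HasSolidNorm E] [IsOrderedAddMonoid E] [NormedSpace ℝ E]
    (T : E →L[ℝ] E) (hT : ∀ x : E, 0 ≤ x → 0 ≤ T x) {a b : E} (hab : a ≤ b) :
    T a ≤ T b := by
  have := hT (b - a) (by simpa using hab)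
  rw [map_sub] at this
  exact sub_nonneg.mp this

lemma aux_norm_posPart {E : Type*} [NormedAddCommGroup E] [Lattice E] [HasSolidNorm E] [IsOrderedAddMonoid E] (x : E) :
    ‖x⁺‖ ≤ ‖x‖ := by
  apply HasSolidNorm.solid
  rw [abs_of_nonneg (posPart_nonneg x)]
  calc x⁺ = x ⊔ 0 := rfl
    _ ≤ |x| := sup_le (le_abs_self x) (abs_nonneg x)

lemma aux_norm_negPart {E : Type*} [NormedAddCommGroup E] [Lattice E] [HasSolidNorm E] [IsOrderedAddMonoid E] (x : E) :
    ‖x⁻‖ ≤ ‖x‖ := by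
  apply HasSolidNorm.solid
  rw [abs_of_nonneg (negPart_nonneg x)]
  calc x⁻ = -x ⊔ 0 := rfl
    _ ≤ |x| := sup_le (neg_le_abs x) (abs_nonneg x)

lemma aux_hard {E : Type*} [NormedAddCommGroup E] [Lattice E] [HasSolidNorm E] [IsOrderedAddMonoid E] [NormedSpace ℝ E] [CompleteSpace E]
    (F : E →L[ℝ] E) (hF : ∀ x : E, 0 ≤ x → 0 ≤ F x)
    (G : E →L[ℝ] E) (hGpos : ∀ x : E, 0 ≤ x → 0 ≤ G x)
    (hGl : (1 - F) * G = 1) (hGr : G * (1 - F) = 1) :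
    ∃ n : ℕ, 1 ≤ n ∧ ‖F ^ n‖ < 1 := by
  -- partial sums are dominated by G on the positive cone
  have key : ∀ m : ℕ, ∀ x : E, 0 ≤ x →
      (∑ j ∈ Finset.range m, (F ^ j) x) ≤ G x := by
    intro m x hx
    have h1 : (∑ j ∈ Finset.range m, F ^ j) * (1 - F) = 1 - F ^ m := by
      have := geom_sum_mul F m
      have h2 : (∑ j ∈ Finset.range m, F ^ j) * (1 - F)
          = -((∑ j ∈ Finset.range m, F ^ j) * (F - 1)) := by noncomm_ring
      rw [h2, this]; noncomm_ring
    have h3 : (∑ j ∈ Finset.range m, F ^ j) = G - F ^ m * G := by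
      calc (∑ j ∈ Finset.range m, F ^ j)
          = (∑ j ∈ Finset.range m, F ^ j) * ((1 - F) * G) := by rw [hGl, mul_one]
        _ = ((∑ j ∈ Finset.range m, F ^ j) * (1 - F)) * G := by rw [mul_assoc]
        _ = (1 - F ^ m) * G := by rw [h1]
        _ = G - F ^ m * G := by noncomm_ring
    have h4 : (∑ j ∈ Finset.range m, (F ^ j) x) = G x - (F ^ m) (G x) := by
      have := congrArg (fun T : E →L[ℝ] E => T x) h3
      simpa [ContinuousLinearMap.sum_apply, ContinuousLinearMap.sub_apply,
        ContinuousLinearMap.mul_apply] using this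
    rw [h4]
    have := aux_pow_pos F hF m (G x) (hGpos x hx)
    simpa using sub_le_self (G x) this
  have single : ∀ k : ℕ, ∀ x : E, 0 ≤ x → (F ^ k) x ≤ G x := by
    intro k x hx
    refine le_trans ?_ (key (k + 1) x hx)
    exact Finset.single_le_sum (f := fun j => (F ^ j) x)
      (fun i _ => aux_pow_pos F hF i x hx) (Finset.self_mem_range_succ k)
  obtain ⟨N, hN⟩ := exists_nat_gt (2 * (‖G‖ * ‖G‖))
  refine ⟨N + 1, by omega, ?_⟩
  -- (N+2) • F^(N+1) x ≤ G (G x) for x ≥ 0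
  have step : ∀ x : E, 0 ≤ x → (N + 2) • ((F ^ (N + 1)) x) ≤ G (G x) := by
    intro x hx
    have termwise : ∀ j ∈ Finset.range (N + 2), (F ^ (N + 1)) x ≤ (F ^ j) (G x) := by
      intro j hj
      rw [Finset.mem_range] at hj
      have hdecomp : (F ^ (N + 1)) x = (F ^ j) ((F ^ (N + 1 - j)) x) := by
        rw [← ContinuousLinearMap.mul_apply, ← pow_add]
        congr 2
        omega
      rw [hdecomp]
      exact aux_mono (F ^ j) (aux_pow_pos F hF j) (single (N + 1 - j) x hx)
    calc (N + 2) • ((F ^ (N + 1)) x)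
        = ∑ j ∈ Finset.range (N + 2), (F ^ (N + 1)) x := by
          rw [Finset.sum_const, Finset.card_range]
      _ ≤ ∑ j ∈ Finset.range (N + 2), (F ^ j) (G x) :=
          Finset.sum_le_sum termwise
      _ ≤ G (G x) := key (N + 2) (G x) (hGpos x hx)
  -- norm bound on positive cone
  have normpos : ∀ x : E, 0 ≤ x →
      ‖(F ^ (N + 1)) x‖ ≤ ‖G‖ * ‖G‖ * ‖x‖ / (N + 2) := by
    intro x hx
    have h0 : (0 : E) ≤ (N + 2) • ((F ^ (N + 1)) x) := by
      have := aux_pow_pos F hF (N + 1) x hx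
      exact nsmul_nonneg this (N + 2)
    have hle : ‖(N + 2) • ((F ^ (N + 1)) x)‖ ≤ ‖G (G x)‖ := by
      apply HasSolidNorm.solid
      rw [abs_of_nonneg h0, abs_of_nonneg
        ((h0.trans (step x hx)))]
      exact step x hx
    have hsmul : ‖(N + 2) • ((F ^ (N + 1)) x)‖
        = ((N : ℝ) + 2) * ‖(F ^ (N + 1)) x‖ := by
      rw [← Nat.cast_smul_eq_nsmul ℝ, norm_smul, Real.norm_eq_abs,
        abs_of_nonneg (by positivity)]
      push_cast
      ring
    have hGG : ‖G (G x)‖ ≤ ‖G‖ * ‖G‖ * ‖x‖ := by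
      calc ‖G (G x)‖ ≤ ‖G‖ * ‖G x‖ := G.le_opNorm _
        _ ≤ ‖G‖ * (‖G‖ * ‖x‖) := by
            have := G.le_opNorm x
            exact mul_le_mul_of_nonneg_left this (norm_nonneg G)
        _ = ‖G‖ * ‖G‖ * ‖x‖ := by ring
    rw [hsmul] at hle
    rw [div_eq_inv_mul, ← mul_assoc]
    have hpos : (0:ℝ) < (N:ℝ) + 2 := by positivity
    calc ‖(F ^ (N + 1)) x‖ = ((N:ℝ) + 2)⁻¹ * (((N:ℝ) + 2) * ‖(F ^ (N + 1)) x‖) := by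
          field_simp
      _ ≤ ((N:ℝ) + 2)⁻¹ * (‖G‖ * ‖G‖ * ‖x‖) := by
          apply mul_le_mul_of_nonneg_left (hle.trans hGG) (by positivity)
      _ = ((N:ℝ) + 2)⁻¹ * (‖G‖ * ‖G‖) * ‖x‖ := by ring
  -- opNorm bound via x = x⁺ - x⁻
  have hbound : ‖F ^ (N + 1)‖ ≤ 2 * (‖G‖ * ‖G‖) / (N + 2) := by
    apply ContinuousLinearMap.opNorm_le_bound _ (by positivity)
    intro x
    have hx : x = x⁺ - x⁻ := (posPart_sub_negPart x).symm
    calc ‖(F ^ (N + 1)) x‖ = ‖(F ^ (N + 1)) x⁺ - (F ^ (N + 1)) x⁻‖ := by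
          conv_lhs => rw [hx]
          rw [map_sub]
      _ ≤ ‖(F ^ (N + 1)) x⁺‖ + ‖(F ^ (N + 1)) x⁻‖ := norm_sub_le _ _
      _ ≤ ‖G‖ * ‖G‖ * ‖x⁺‖ / (N + 2) + ‖G‖ * ‖G‖ * ‖x⁻‖ / (N + 2) :=
          add_le_add (normpos _ (posPart_nonneg x)) (normpos _ (negPart_nonneg x))
      _ ≤ ‖G‖ * ‖G‖ * ‖x‖ / (N + 2) + ‖G‖ * ‖G‖ * ‖x‖ / (N + 2) := by
          gcongr
          · exact aux_norm_posPart x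
          · exact aux_norm_negPart x
      _ = 2 * (‖G‖ * ‖G‖) / (N + 2) * ‖x‖ := by ring
  refine hbound.trans_lt ?_
  rw [div_lt_one (by positivity)]
  calc 2 * (‖G‖ * ‖G‖) < N := hN
    _ < (N:ℝ) + 2 := by linarith

lemma aux_norm_pow_mul_le {A : Type*} [NormedRing A] (a b : A) (ha : ‖(1:A)‖ ≤ 1) :
    ∀ q : ℕ, ‖a ^ q * b‖ ≤ ‖a‖ ^ q * ‖b‖ := by
  intro q
  induction q generalizing b with
  | zero => simpa using le_refl ‖b‖
  | succ q ih =>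
    rw [pow_succ, mul_assoc]
    calc ‖a ^ q * (a * b)‖ ≤ ‖a‖ ^ q * ‖a * b‖ := ih _
      _ ≤ ‖a‖ ^ q * (‖a‖ * ‖b‖) :=
          mul_le_mul_of_nonneg_left (norm_mul_le a b) (pow_nonneg (norm_nonneg a) q)
      _ = ‖a‖ ^ (q + 1) * ‖b‖ := by ring

set_option maxHeartbeats 1000000 in
lemma aux_summable {E : Type*} [NormedAddCommGroup E] [Lattice E] [HasSolidNorm E] [IsOrderedAddMonoid E] [NormedSpace ℝ E]
    [CompleteSpace E] (F : E →L[ℝ] E) {n : ℕ} (hn : 1 ≤ n) (h : ‖F ^ n‖ < 1) :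
    Summable (fun k : ℕ => F ^ k) := by
  have hnz : NeZero n := ⟨by omega⟩
  have hone : ‖(1 : E →L[ℝ] E)‖ ≤ 1 := by
    rw [ContinuousLinearMap.one_def]; exact ContinuousLinearMap.norm_id_le
  set C : ℝ := (max 1 ‖F‖) ^ n with hC
  have hmax : (1:ℝ) ≤ max 1 ‖F‖ := le_max_left _ _
  have hC0 : 0 ≤ C := pow_nonneg (by positivity) n
  have hCle : ∀ m : ℕ, m ≤ n → ‖F ^ m‖ ≤ C := by
    intro m hm
    have h1 : ‖F ^ m‖ ≤ (max 1 ‖F‖) ^ m := by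
      induction m with
      | zero => simpa using hone
      | succ m ih =>
        rw [pow_succ, pow_succ]
        calc ‖F ^ m * F‖ ≤ ‖F ^ m‖ * ‖F‖ := norm_mul_le _ _
          _ ≤ (max 1 ‖F‖) ^ m * max 1 ‖F‖ :=
              mul_le_mul (ih (by omega)) (le_max_right _ _) (norm_nonneg _)
                (pow_nonneg (by positivity) m)
    exact h1.trans (pow_le_pow_right₀ hmax hm)
  apply Summable.of_norm
  have hb : ∀ k : ℕ, ‖F ^ k‖ ≤ ‖F ^ n‖ ^ (k / n) * C := by
    intro k
    have hk : F ^ k = (F ^ n) ^ (k / n) * F ^ (k % n) := by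
      rw [← pow_mul, ← pow_add]
      congr 1
      exact (Nat.div_add_mod k n).symm
    rw [hk]
    calc ‖(F ^ n) ^ (k / n) * F ^ (k % n)‖ ≤ ‖F ^ n‖ ^ (k / n) * ‖F ^ (k % n)‖ :=
          aux_norm_pow_mul_le (F ^ n) (F ^ (k % n)) hone (k / n)
      _ ≤ ‖F ^ n‖ ^ (k / n) * C :=
          mul_le_mul_of_nonneg_left (hCle _ (le_of_lt (Nat.mod_lt _ (by omega))))
            (pow_nonneg (norm_nonneg _) _)
  apply Summable.of_nonneg_of_le (fun k => norm_nonneg _) hb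
  have hs : Summable (fun p : ℕ × Fin n => ‖F ^ n‖ ^ p.1 * C) :=
    (summable_geometric_of_lt_one (norm_nonneg _) h).mul_of_nonneg
      (Summable.of_finite (f := fun _ : Fin n => C))
      (fun k => pow_nonneg (norm_nonneg _) k) (fun _ => hC0)
  have h2 := (Nat.divModEquiv n).summable_iff.mpr hs
  simpa [Function.comp_def, Nat.divModEquiv] using h2

lemma aux_neumann {E : Type*} [NormedAddCommGroup E] [Lattice E] [HasSolidNorm E] [IsOrderedAddMonoid E] [NormedSpace ℝ E] [CompleteSpace E]
    (F : E →L[ℝ] E) (hF : ∀ x : E, 0 ≤ x → 0 ≤ F x)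
    {n : ℕ} (hn : 1 ≤ n) (h : ‖F ^ n‖ < 1) :
    ∃ G : E →L[ℝ] E, HasSum (fun k : ℕ => F ^ k) G ∧ (∀ x : E, 0 ≤ x → 0 ≤ G x) ∧
      (1 - F) * G = 1 ∧ G * (1 - F) = 1 := by
  obtain ⟨G, hG⟩ := (aux_summable F hn h)
  have hshift : HasSum (fun k : ℕ => F ^ (k + 1)) (G - 1) := by
    refine (hasSum_nat_add_iff 1).mpr ?_
    simpa using hG
  have htel : HasSum (fun k : ℕ => F ^ k - F ^ (k + 1)) (1 : E →L[ℝ] E) := by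
    simpa using hG.sub hshift
  have hleft : HasSum (fun k : ℕ => F ^ k - F ^ (k + 1)) ((1 - F) * G) := by
    have h2 := hG.mul_left (1 - F)
    have e : (fun k : ℕ => F ^ k - F ^ (k + 1)) = fun k => (1 - F) * F ^ k := by
      funext k
      rw [sub_mul, one_mul, ← pow_succ']
    rw [e]; exact h2
  have hright : HasSum (fun k : ℕ => F ^ k - F ^ (k + 1)) (G * (1 - F)) := by
    have h2 := hG.mul_right (1 - F)
    have e : (fun k : ℕ => F ^ k - F ^ (k + 1)) = fun k => F ^ k * (1 - F) := by
      funext k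
      rw [mul_sub, mul_one, ← pow_succ]
    rw [e]; exact h2
  refine ⟨G, hG, ?_, hleft.unique htel, hright.unique htel⟩
  intro x hx
  have hx' : HasSum (fun k : ℕ => (F ^ k) x) (G x) := by
    have h2 := (ContinuousLinearMap.apply ℝ E x).hasSum hG
    simpa using h2
  exact hasSum_le (fun k => aux_pow_pos F hF k x hx) hasSum_zero hx'

/-- Let `E` be a Banach lattice and `F : E →L[ℝ] E` a positive bounded
linear operator. Then `I - F` has a positive bounded inverse iff `‖Fⁿ‖ < 1` for some `n ≥ 1`
(equivalently, the spectral radius of `F` is `< 1`); and in this case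
`(I - F)⁻¹ = ∑ₖ Fᵏ`, which is a positive operator. -/
theorem stmt_0 {E : Type*} [NormedAddCommGroup E] [Lattice E] [HasSolidNorm E] [IsOrderedAddMonoid E] [NormedSpace ℝ E] [CompleteSpace E]
    (F : E →L[ℝ] E) (hF : ∀ x : E, 0 ≤ x → 0 ≤ F x) :
    ((∃ G : E →L[ℝ] E, (∀ x : E, 0 ≤ x → 0 ≤ G x) ∧
        (1 - F) * G = 1 ∧ G * (1 - F) = 1) ↔
      (∃ n : ℕ, 1 ≤ n ∧ ‖F ^ n‖ < 1)) ∧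
    ((∃ n : ℕ, 1 ≤ n ∧ ‖F ^ n‖ < 1) →
      ∃ G : E →L[ℝ] E, HasSum (fun k : ℕ => F ^ k) G ∧
        (∀ x : E, 0 ≤ x → 0 ≤ G x) ∧ (1 - F) * G = 1 ∧ G * (1 - F) = 1) := by
  constructor
  · constructor
    · rintro ⟨G, hGpos, hGl, hGr⟩
      exact aux_hard F hF G hGpos hGl hGr
    · rintro ⟨n, hn, h⟩
      obtain ⟨G, _, hp, hl, hr⟩ := aux_neumann F hF hn h
      exact ⟨G, hp, hl, hr⟩
  · rintro ⟨n, hn, h⟩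
    exact aux_neumann F hF hn h
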